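/- Let Σ be a signature with only finitely many operation symbols, each of finite arity. A class of finite Σ-algebras is a pseudovariety, i.e. closed under homomorphic images (codomains of surjective Σ-homomorphisms with domain in the class), subalgebras, and finite products of its members, if and only if there is a sequence (s_i = t_i)_{i<ω} of term equations (each over a finite set of variables) such that a finite Σ-algebra belongs to the class if and only if it eventually satisfies the sequence. -/

import Mathlib

universe u

/-- Σ-terms over a set `X` of variables, for the signature with operation symbols `S`
and arity function `ar`. -/
inductive Term (S : Type u) (ar : S → ℕ) (X : Type u) : Type u
  | var : X → Term S ar X
  | op : (s : S) → (Fin (ar s) → Term S ar X) → Term S ar X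

/-- A Σ-algebra: a set with an `ar s`-ary operation for each `s ∈ S`. -/
structure Alg (S : Type u) (ar : S → ℕ) : Type (u + 1) where
  carrier : Type u
  op : (s : S) → (Fin (ar s) → carrier) → carrier

variable {S : Type u} {ar : S → ℕ}

/-- The unique homomorphic extension `h#` of `h : X → A` to the term algebra. -/
def Alg.eval (A : Alg S ar) {X : Type u} (h : X → A.carrier) : Term S ar X → A.carrier
  | Term.var x => h x
  | Term.op s v => A.op s fun i => A.eval h (v i)

/-- A Σ-homomorphism. -/
def IsHom (A B : Alg S ar) (f : A.carrier → B.carrier) : Prop :=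
  ∀ (s : S) (v : Fin (ar s) → A.carrier), f (A.op s v) = B.op s fun i => f (v i)

/-- A Σ-algebra satisfies the term equation `s = t` over `X` if all evaluations agree. -/
def Alg.Satisfies (A : Alg S ar) {X : Type u} (s t : Term S ar X) : Prop :=
  ∀ h : X → A.carrier, A.eval h s = A.eval h t

/-- The product of a family of Σ-algebras, with pointwise operations. -/
def prodAlg {I : Type u} (f : I → Alg S ar) : Alg S ar where
  carrier := ∀ i, (f i).carrier
  op := fun s v i => (f i).op s fun j => v j i

/-- The term algebra `T_Σ X`. -/
def termAlg (S : Type u) (ar : S → ℕ) (X : Type u) : Alg S ar where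
  carrier := Term S ar X
  op := Term.op

/-- A finite Σ-algebra eventually satisfies a sequence of term equations if it
satisfies all but finitely many of them. -/
def EventuallySatisfies (A : Alg S ar)
    (seq : ℕ → Σ X : Type u, Term S ar X × Term S ar X) : Prop :=
  ∃ i₀ : ℕ, ∀ i ≥ i₀, A.Satisfies (seq i).2.1 (seq i).2.2
section Aux
variable {S : Type u} {ar : S → ℕ}

theorem eval_hom {A B : Alg S ar} {f : A.carrier → B.carrier} (hf : IsHom A B f)
    {X : Type u} (h : X → A.carrier) : ∀ t, f (A.eval h t) = B.eval (f ∘ h) t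
  | Term.var x => rfl
  | Term.op s v => by
    show f (A.op s fun i => A.eval h (v i)) = B.op s fun i => B.eval (f ∘ h) (v i)
    rw [hf]
    exact congrArg _ (funext fun i => eval_hom hf h (v i))

theorem eval_coord {I : Type u} (f : I → Alg S ar) {X : Type u}
    (h : X → (prodAlg f).carrier) (t : Term S ar X) (i : I) :
    (prodAlg f).eval h t i = (f i).eval (fun x => h x i) t :=
  eval_hom (A := prodAlg f) (B := f i) (f := fun p => p i) (fun _ _ => rfl) h t

end Aux
section Constr
variable {S : Type u} {ar : S → ℕ} (K : Set (Alg S ar))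

/-- Algebra structures on `ULift (Fin m)`. -/
abbrev AlgOn (ar : S → ℕ) (m : ℕ) : Type u :=
  (s : S) → (Fin (ar s) → ULift.{u} (Fin m)) → ULift.{u} (Fin m)

/-- Index type for the big product at level `n`. -/
abbrev Idx (n : ℕ) : Type u :=
  Σ k : ULift.{u} (Fin (n + 1)),
    {o : AlgOn ar k.down.val // (Alg.mk (ULift.{u} (Fin k.down.val)) o) ∈ K} ×
      (ULift.{u} (Fin n) → ULift.{u} (Fin k.down.val))

lemma finite_Idx (hS : Finite S) (n : ℕ) : Finite (Idx K n) := by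
  infer_instance

def fam (n : ℕ) : Idx K n → Alg S ar := fun i => Alg.mk (ULift.{u} (Fin i.1.down.val)) i.2.1.val

lemma fam_mem (n : ℕ) (i : Idx K n) : fam K n i ∈ K := i.2.1.2

def bigP (n : ℕ) : Alg S ar := prodAlg (fam K n)

lemma finite_bigP (hS : Finite S) (n : ℕ) : Finite (bigP K n).carrier := by
  haveI := finite_Idx K hS n
  haveI : ∀ i : Idx K n, Finite ((fam K n i).carrier) := fun i =>
    inferInstanceAs (Finite (ULift.{u} (Fin i.1.down.val)))
  exact inferInstanceAs (Finite (∀ i : Idx K n, (fam K n i).carrier))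

def easgn (n : ℕ) : ULift.{u} (Fin n) → (bigP K n).carrier := fun x i => i.2.2 x

def evalP (n : ℕ) : Term S ar (ULift.{u} (Fin n)) → (bigP K n).carrier :=
  (bigP K n).eval (easgn K n)

end Constr
section Constr2
variable {S : Type u} {ar : S → ℕ} (K : Set (Alg S ar))

/-- The kernel of `evalP` consists of equations valid in all members of `K`
of cardinality at most `n`. -/
lemma ker_valid
    (hH : ∀ A ∈ K, ∀ B : Alg S ar,
      (∃ f : A.carrier → B.carrier, IsHom A B f ∧ Function.Surjective f) → B ∈ K)
    (n : ℕ) {t t' : Term S ar (ULift.{u} (Fin n))}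
    (hker : evalP K n t = evalP K n t')
    (B : Alg S ar) (hB : B ∈ K) (hBfin : Finite B.carrier)
    (hcard : Nat.card B.carrier ≤ n) : B.Satisfies t t' := by
  intro h
  haveI := hBfin
  set k := Nat.card B.carrier with hk
  let β : B.carrier ≃ ULift.{u} (Fin k) := (Finite.equivFin B.carrier).trans Equiv.ulift.symm
  let o : AlgOn ar k := fun s v => β (B.op s fun i => β.symm (v i))
  have hhom : IsHom B (Alg.mk (ULift.{u} (Fin k)) o) β := by
    intro s v
    show β (B.op s v) = β (B.op s fun i => β.symm (β (v i)))
    simp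
  have hmem : (Alg.mk (ULift.{u} (Fin k)) o) ∈ K :=
    hH B hB _ ⟨β, hhom, β.surjective⟩
  have hkn : k < n + 1 := Nat.lt_succ_of_le hcard
  let i : Idx K n := ⟨⟨⟨k, hkn⟩⟩, ⟨o, hmem⟩, fun x => β (h x)⟩
  have h1 : ∀ u : Term S ar (ULift.{u} (Fin n)),
      evalP K n u i = β (B.eval h u) := by
    intro u
    have := eval_coord (fam K n) (easgn K n) u i
    have h2 := eval_hom (A := B) (B := Alg.mk (ULift.{u} (Fin k)) o) hhom h u
    exact this.trans h2.symm
  have := congrFun hker i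
  rw [h1, h1] at this
  exact β.injective this

end Constr2
section Constr3
variable {S : Type u} {ar : S → ℕ} (K : Set (Alg S ar))

/-- Elements of the range of `evalP`. -/
abbrev RangeP (n : ℕ) : Type u := {p : (bigP K n).carrier // p ∈ Set.range (evalP K n)}

/-- A chosen term representing an element of the range of `evalP`. -/
noncomputable def rep {n : ℕ} (p : RangeP K n) : Term S ar (ULift.{u} (Fin n)) :=
  p.2.choose

lemma rep_spec {n : ℕ} (p : RangeP K n) : evalP K n (rep K p) = p.1 := p.2.choose_spec

/-- The normal form of a term: the chosen representative of its value. -/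
noncomputable def nf {n : ℕ} (t : Term S ar (ULift.{u} (Fin n))) :
    Term S ar (ULift.{u} (Fin n)) :=
  rep K ⟨evalP K n t, ⟨t, rfl⟩⟩

lemma evalP_nf {n : ℕ} (t : Term S ar (ULift.{u} (Fin n))) :
    evalP K n (nf K t) = evalP K n t :=
  rep_spec K _

lemma nf_congr {n : ℕ} {t t' : Term S ar (ULift.{u} (Fin n))}
    (h : evalP K n t = evalP K n t') : nf K t = nf K t' := by
  unfold nf
  congr 1
  exact Subtype.ext h

/-- Index type for the generating equations at level `n`. -/
abbrev Gam (n : ℕ) : Type u :=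
  ULift.{u} (Fin n) ⊕ Σ s : S, (Fin (ar s) → RangeP K n)

lemma finite_Gam (hS : Finite S) (n : ℕ) : Finite (Gam K n) := by
  haveI := finite_bigP K hS n
  infer_instance

/-- The left-hand sides of the generating equations. -/
noncomputable def gen {n : ℕ} : Gam K n → Term S ar (ULift.{u} (Fin n))
  | Sum.inl x => Term.var x
  | Sum.inr ⟨s, p⟩ => Term.op s fun i => rep K (p i)

/-- If `A` identically satisfies all generating equations at level `n`, then every term
evaluates like its normal form. -/
lemma sat_nf {n : ℕ} (A : Alg S ar)
    (hsat : ∀ γ : Gam K n, A.Satisfies (gen K γ) (nf K (gen K γ))) :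
    ∀ (t : Term S ar (ULift.{u} (Fin n))) (h : ULift.{u} (Fin n) → A.carrier),
      A.eval h t = A.eval h (nf K t)
  | Term.var x, h => hsat (Sum.inl x) h
  | Term.op s v, h => by
    let p : Fin (ar s) → RangeP K n := fun i => ⟨evalP K n (v i), ⟨v i, rfl⟩⟩
    have hrp : ∀ i, rep K (p i) = nf K (v i) := fun i => rfl
    have step1 : A.eval h (Term.op s v) = A.eval h (gen K (Sum.inr ⟨s, p⟩)) := by
      show (A.op s fun i => A.eval h (v i)) = A.op s fun i => A.eval h (rep K (p i))
      exact congrArg _ (funext fun i => sat_nf A hsat (v i) h)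
    have step2 : evalP K n (gen K (Sum.inr ⟨s, p⟩)) = evalP K n (Term.op s v) := by
      show ((bigP K n).op s fun i => evalP K n (rep K (p i)))
          = (bigP K n).op s fun i => evalP K n (v i)
      exact congrArg _ (funext fun i => rep_spec K (p i))
    rw [step1, hsat (Sum.inr ⟨s, p⟩) h, nf_congr K step2]

end Constr3
section Constr4
variable {S : Type u} {ar : S → ℕ} (K : Set (Alg S ar))

/-- Members of `K` of cardinality at most `n` satisfy all generating equations. -/
lemma valid_gen
    (hH : ∀ A ∈ K, ∀ B : Alg S ar,
      (∃ f : A.carrier → B.carrier, IsHom A B f ∧ Function.Surjective f) → B ∈ K)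
    (n : ℕ) (B : Alg S ar) (hB : B ∈ K) (hBfin : Finite B.carrier)
    (hcard : Nat.card B.carrier ≤ n) (γ : Gam K n) :
    B.Satisfies (gen K γ) (nf K (gen K γ)) :=
  ker_valid K hH n (evalP_nf K (gen K γ)).symm B hB hBfin hcard

/-- If a finite algebra `A` is an image of `ULift (Fin n)` and identically satisfies all
generating equations at level `n`, then `A ∈ K`. -/
lemma level
    (hH : ∀ A ∈ K, ∀ B : Alg S ar,
      (∃ f : A.carrier → B.carrier, IsHom A B f ∧ Function.Surjective f) → B ∈ K)
    (hSub : ∀ B ∈ K, ∀ A : Alg S ar,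
      (∃ f : A.carrier → B.carrier, IsHom A B f ∧ Function.Injective f) → A ∈ K)
    (hP : ∀ (I : Type u), Finite I → ∀ f : I → Alg S ar, (∀ i, f i ∈ K) → prodAlg f ∈ K)
    (hS : Finite S) (n : ℕ) (A : Alg S ar)
    (g : ULift.{u} (Fin n) → A.carrier) (hg : Function.Surjective g)
    (hsat : ∀ γ : Gam K n, A.Satisfies (gen K γ) (nf K (gen K γ))) : A ∈ K := by
  -- the big product is in K
  have memP : bigP K n ∈ K := hP (Idx K n) (finite_Idx K hS n) (fam K n) (fam_mem K n)
  -- the subalgebra on the range of evalP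
  let F : Alg S ar :=
    ⟨RangeP K n, fun s v => ⟨evalP K n (Term.op s fun i => rep K (v i)),
      ⟨Term.op s fun i => rep K (v i), rfl⟩⟩⟩
  have hval : IsHom F (bigP K n) Subtype.val := by
    intro s v
    show evalP K n (Term.op s fun i => rep K (v i)) = (bigP K n).op s fun i => (v i).1
    show ((bigP K n).op s fun i => evalP K n (rep K (v i))) = (bigP K n).op s fun i => (v i).1
    exact congrArg _ (funext fun i => rep_spec K (v i))
  have memF : F ∈ K := hSub (bigP K n) memP F ⟨Subtype.val, hval, Subtype.val_injective⟩
  -- the surjection onto A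
  let φ : F.carrier → A.carrier := fun p => A.eval g (rep K p)
  have φ_spec : ∀ (t : Term S ar (ULift.{u} (Fin n)))
      (hm : evalP K n t ∈ Set.range (evalP K n)),
      φ ⟨evalP K n t, hm⟩ = A.eval g t := by
    intro t hm
    have h1 : rep K ⟨evalP K n t, hm⟩ = nf K t := rfl
    show A.eval g (rep K ⟨evalP K n t, hm⟩) = A.eval g t
    rw [h1]
    exact (sat_nf K A hsat t g).symm
  have hφ : IsHom F A φ := by
    intro s v
    have := φ_spec (Term.op s fun i => rep K (v i)) ⟨_, rfl⟩
    calc φ (F.op s v) = A.eval g (Term.op s fun i => rep K (v i)) := this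
      _ = A.op s fun i => φ (v i) := rfl
  have hφs : Function.Surjective φ := by
    intro a
    obtain ⟨x, rfl⟩ := hg a
    exact ⟨⟨evalP K n (Term.var x), ⟨Term.var x, rfl⟩⟩, φ_spec (Term.var x) _⟩
  exact hH F memF A ⟨φ, hφ, hφs⟩

end Constr4
section Seq
variable {S : Type u} {ar : S → ℕ} (K : Set (Alg S ar))

/-- The trivial equation `x = x` over `PUnit`. -/
def trivEq : Σ X : Type u, Term S ar X × Term S ar X :=
  ⟨PUnit, (Term.var PUnit.unit, Term.var PUnit.unit)⟩

/-- The block of equations at level `n`. -/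
noncomputable def blockList (hS : Finite S) (n : ℕ) :
    List (Σ X : Type u, Term S ar X × Term S ar X) :=
  (haveI := finite_Gam K hS n
   haveI := Fintype.ofFinite (Gam K n)
   (Finset.univ : Finset (Gam K n)).toList.map fun γ =>
     ⟨ULift.{u} (Fin n), (gen K γ, nf K (gen K γ))⟩) ++ [trivEq]

lemma blockList_pos (hS : Finite S) (n : ℕ) : 1 ≤ (blockList K hS n).length := by
  unfold blockList
  simp

lemma mem_blockList (hS : Finite S) (n : ℕ) (γ : Gam K n) :
    (⟨ULift.{u} (Fin n), (gen K γ, nf K (gen K γ))⟩ :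
      Σ X : Type u, Term S ar X × Term S ar X) ∈ blockList K hS n := by
  unfold blockList
  apply List.mem_append_left
  apply List.mem_map_of_mem
  haveI := finite_Gam K hS n
  simp [Finset.mem_toList]

lemma blockList_sat (hS : Finite S)
    (hH : ∀ A ∈ K, ∀ B : Alg S ar,
      (∃ f : A.carrier → B.carrier, IsHom A B f ∧ Function.Surjective f) → B ∈ K)
    (n : ℕ) (B : Alg S ar) (hB : B ∈ K) (hBfin : Finite B.carrier)
    (hcard : Nat.card B.carrier ≤ n) :
    ∀ q ∈ blockList K hS n, B.Satisfies q.2.1 q.2.2 := by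
  intro q hq
  unfold blockList at hq
  rcases List.mem_append.mp hq with hq | hq
  · obtain ⟨γ, -, rfl⟩ := List.mem_map.mp hq
    exact valid_gen K hH n B hB hBfin hcard γ
  · rcases List.mem_singleton.mp hq with rfl
    intro h
    rfl

lemma blockList_finvar (hS : Finite S) (n : ℕ) :
    ∀ q ∈ blockList K hS n, Finite q.1 := by
  intro q hq
  unfold blockList at hq
  rcases List.mem_append.mp hq with hq | hq
  · obtain ⟨γ, -, rfl⟩ := List.mem_map.mp hq
    exact inferInstanceAs (Finite (ULift (Fin n)))
  · rcases List.mem_singleton.mp hq with rfl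
    exact inferInstanceAs (Finite PUnit.{u+1})

/-- Concatenation of the first `n` blocks. -/
noncomputable def bigL (hS : Finite S) : ℕ → List (Σ X : Type u, Term S ar X × Term S ar X)
  | 0 => []
  | n + 1 => bigL hS n ++ blockList K hS n

/-- The starting position of block `n`. -/
noncomputable def offset (hS : Finite S) (n : ℕ) : ℕ := (bigL K hS n).length

/-- The final sequence of equations. -/
noncomputable def theSeq (hS : Finite S) (k : ℕ) : Σ X : Type u, Term S ar X × Term S ar X :=
  (bigL K hS (k + 1)).getD k (trivEq)

lemma offset_succ (hS : Finite S) (n : ℕ) :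
    offset K hS (n + 1) = offset K hS n + (blockList K hS n).length := by
  unfold offset
  rw [bigL]
  exact List.length_append

lemma self_le_offset (hS : Finite S) (n : ℕ) : n ≤ offset K hS n := by
  induction n with
  | zero => exact Nat.zero_le _
  | succ n ih =>
    rw [offset_succ]
    have := blockList_pos K hS n
    omega

lemma offset_mono (hS : Finite S) {n m : ℕ} (h : n ≤ m) : offset K hS n ≤ offset K hS m := by
  induction m with
  | zero =>
    have hn0 : n = 0 := by omega
    subst hn0; exact le_rfl
  | succ m ih =>
    rcases Nat.lt_or_ge n (m+1) with h' | h'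
    · have := ih (by omega)
      rw [offset_succ]; omega
    · have hn : n = m + 1 := by omega
      subst hn; exact le_rfl

lemma bigL_prefix (hS : Finite S) {n m : ℕ} (h : n ≤ m) :
    ∃ t, bigL K hS m = bigL K hS n ++ t := by
  induction m with
  | zero =>
    have : n = 0 := by omega
    subst this; exact ⟨[], rfl⟩
  | succ m ih =>
    rcases Nat.lt_or_ge n (m+1) with h' | h'
    · obtain ⟨t, ht⟩ := ih (by omega)
      exact ⟨t ++ blockList K hS m, by show bigL K hS m ++ _ = _; rw [ht, List.append_assoc]⟩
    · have : n = m + 1 := by omega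
      subst this; exact ⟨[], by simp⟩

lemma seq_stable (hS : Finite S) {k n : ℕ} (hk : k < offset K hS n) :
    theSeq K hS k = (bigL K hS n).getD k trivEq := by
  unfold theSeq
  rcases Nat.le_total (k+1) n with h | h
  · obtain ⟨t, ht⟩ := bigL_prefix K hS h
    rw [ht]
    have hlen : k < (bigL K hS (k+1)).length := by
      have := self_le_offset K hS (k+1)
      unfold offset at this
      omega
    rw [List.getD_eq_getElem?_getD, List.getD_eq_getElem?_getD,
      List.getElem?_append_left hlen]
  · obtain ⟨t, ht⟩ := bigL_prefix K hS h
    rw [ht]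
    have hlen : k < (bigL K hS n).length := hk
    rw [List.getD_eq_getElem?_getD, List.getD_eq_getElem?_getD,
      List.getElem?_append_left hlen]

lemma seq_block (hS : Finite S) {n j : ℕ} (hj : j < (blockList K hS n).length) :
    theSeq K hS (offset K hS n + j) = (blockList K hS n).getD j trivEq := by
  have h1 : offset K hS n + j < offset K hS (n+1) := by rw [offset_succ]; omega
  rw [seq_stable K hS h1]
  show (bigL K hS n ++ blockList K hS n).getD _ _ = _
  rw [List.getD_eq_getElem?_getD, List.getD_eq_getElem?_getD,
    List.getElem?_append_right (by exact Nat.le_add_right _ _)]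
  have hidx : offset K hS n + j - (bigL K hS n).length = j := by
    have : offset K hS n = (bigL K hS n).length := rfl
    omega
  rw [hidx]

lemma seq_decomp (hS : Finite S) (k : ℕ) :
    ∃ n j, j < (blockList K hS n).length ∧ k = offset K hS n + j := by
  set P := fun n => offset K hS n ≤ k with hP
  have h0 : P 0 := by show offset K hS 0 ≤ k; unfold offset bigL; simp
  set n := Nat.findGreatest P k with hn
  have h1 : P n := Nat.findGreatest_spec (Nat.zero_le k) h0
  have h2 : ¬ P (n + 1) := by
    rcases Nat.lt_or_ge k (n+1) with h' | h'
    · intro hc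
      have := self_le_offset K hS (n+1)
      show False
      have : offset K hS (n+1) ≤ k := hc
      omega
    · exact Nat.findGreatest_is_greatest (Nat.lt_succ_self n) h'
  have h3 : offset K hS n ≤ k := h1
  have h4 : k < offset K hS (n+1) := by omega
  rw [offset_succ] at h4
  exact ⟨n, k - offset K hS n, by omega, by omega⟩

end Seq

/-- **Eilenberg–Schützenberger Theorem**: for a signature with finitely many
operation symbols, a class of finite Σ-algebras is a pseudovariety (closed under
homomorphic images, subalgebras and finite products) iff it is axiomatizable by a
sequence of term equations, each over a finite set of variables, where a finite
algebra belongs to the class iff it eventually satisfies the sequence. -/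
theorem eilenberg_schutzenberger (S : Type u) (ar : S → ℕ) (hS : Finite S)
    (K : Set (Alg S ar)) (hKfin : ∀ A ∈ K, Finite A.carrier) :
    ((∀ A ∈ K, ∀ B : Alg S ar,
        (∃ f : A.carrier → B.carrier, IsHom A B f ∧ Function.Surjective f) → B ∈ K) ∧
     (∀ B ∈ K, ∀ A : Alg S ar,
        (∃ f : A.carrier → B.carrier, IsHom A B f ∧ Function.Injective f) → A ∈ K) ∧
     (∀ (I : Type u), Finite I → ∀ f : I → Alg S ar, (∀ i, f i ∈ K) → prodAlg f ∈ K)) ↔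
    ∃ seq : ℕ → Σ X : Type u, Term S ar X × Term S ar X,
      (∀ i, Finite (seq i).1) ∧
      ∀ A : Alg S ar, Finite A.carrier → (A ∈ K ↔ EventuallySatisfies A seq) := by
  constructor
  · rintro ⟨hH, hSub, hP⟩
    refine ⟨theSeq K hS, ?_, ?_⟩
    · intro k
      obtain ⟨n, j, hj, rfl⟩ := seq_decomp K hS k
      rw [seq_block K hS hj]
      have hmem : (blockList K hS n).getD j trivEq ∈ blockList K hS n := by
        rw [List.getD_eq_getElem?_getD, List.getElem?_eq_getElem hj]
        exact List.getElem_mem hj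
      exact blockList_finvar K hS n _ hmem
    · intro A hAfin
      constructor
      · intro hA
        refine ⟨offset K hS (Nat.card A.carrier), fun k hk => ?_⟩
        obtain ⟨n, j, hj, rfl⟩ := seq_decomp K hS k
        have hcard : Nat.card A.carrier ≤ n := by
          by_contra hc
          push_neg at hc
          have h1 : offset K hS (n+1) ≤ offset K hS (Nat.card A.carrier) :=
            offset_mono K hS (by omega)
          rw [offset_succ] at h1
          omega
        rw [seq_block K hS hj]
        have hmem : (blockList K hS n).getD j trivEq ∈ blockList K hS n := by
          rw [List.getD_eq_getElem?_getD, List.getElem?_eq_getElem hj]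
          exact List.getElem_mem hj
        exact blockList_sat K hS hH n A hA hAfin hcard _ hmem
      · rintro ⟨k₀, hk₀⟩
        rcases isEmpty_or_nonempty A.carrier with hE | hNE
        · have memT : prodAlg (fun _ : PEmpty.{u+1} => A) ∈ K :=
            hP _ inferInstance _ (fun i => i.elim)
          refine hSub _ memT A ⟨fun _ i => i.elim, ?_, ?_⟩
          · intro s v
            exact (hE.false (A.op s v)).elim
          · intro a _ _
            exact (hE.false a).elim
        · set m := Nat.card A.carrier with hm
          haveI := hAfin
          have hm1 : 1 ≤ m := Nat.card_pos
          set n := max k₀ m with hn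
          have hmn : m ≤ n := le_max_right _ _
          let e : A.carrier ≃ Fin m := Finite.equivFin A.carrier
          let g : ULift.{u} (Fin n) → A.carrier :=
            fun x => e.symm ⟨min x.down.val (m - 1), by omega⟩
          have hg : Function.Surjective g := by
            intro a
            refine ⟨⟨⟨(e a).val, by have := (e a).isLt; omega⟩⟩, ?_⟩
            show e.symm ⟨min (e a).val (m - 1), _⟩ = a
            have hlt : (e a).val < m := (e a).isLt
            have : min (e a).val (m - 1) = (e a).val := by omega
            simp only [this]
            rw [show (⟨(e a).val, hlt⟩ : Fin m) = e a from Fin.ext rfl] at *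
            simp
          apply level K hH hSub hP hS n A g hg
          intro γ
          have hmem := mem_blockList K hS n γ
          obtain ⟨j, hj, hget⟩ := List.mem_iff_getElem.mp hmem
          have hks : k₀ ≤ offset K hS n + j :=
            le_trans (le_trans (le_max_left _ _) (self_le_offset K hS n))
              (Nat.le_add_right _ _)
          have hs := hk₀ (offset K hS n + j) hks
          rw [seq_block K hS hj] at hs
          have hgd : (blockList K hS n).getD j trivEq
              = ⟨ULift.{u} (Fin n), (gen K γ, nf K (gen K γ))⟩ := by
            rw [List.getD_eq_getElem?_getD, List.getElem?_eq_getElem hj]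
            exact hget
          rw [hgd] at hs
          exact hs
  · rintro ⟨seq, hfin, hiff⟩
    refine ⟨?_, ?_, ?_⟩
    · rintro A hA B ⟨f, hf, hsurj⟩
      haveI hAf := hKfin A hA
      haveI hBf : Finite B.carrier := Finite.of_surjective f hsurj
      rw [hiff B hBf]
      obtain ⟨i₀, hi⟩ := (hiff A hAf).mp hA
      refine ⟨i₀, fun i hik h => ?_⟩
      let gpre : (seq i).1 → A.carrier := fun x => (hsurj (h x)).choose
      have hfg : f ∘ gpre = h := funext fun x => (hsurj (h x)).choose_spec
      have e1 := eval_hom hf gpre (seq i).2.1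
      have e2 := eval_hom hf gpre (seq i).2.2
      rw [hfg] at e1 e2
      rw [← e1, ← e2, hi i hik gpre]
    · rintro B hB A ⟨f, hf, hinj⟩
      haveI hBf := hKfin B hB
      haveI hAf : Finite A.carrier := Finite.of_injective f hinj
      rw [hiff A hAf]
      obtain ⟨i₀, hi⟩ := (hiff B hBf).mp hB
      refine ⟨i₀, fun i hik h => hinj ?_⟩
      rw [eval_hom hf h, eval_hom hf h]
      exact hi i hik (f ∘ h)
    · intro I hI f hfK
      haveI := hI
      haveI : ∀ i, Finite (f i).carrier := fun i => hKfin _ (hfK i)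
      haveI hPfin : Finite (prodAlg f).carrier :=
        inferInstanceAs (Finite (∀ i, (f i).carrier))
      rw [hiff _ hPfin]
      have h := fun i => (hiff (f i) (hKfin _ (hfK i))).mp (hfK i)
      choose i₀ hi₀ using h
      haveI := Fintype.ofFinite I
      refine ⟨Finset.univ.sup i₀, fun k hk h => ?_⟩
      funext i
      rw [eval_coord, eval_coord]
      exact hi₀ i k (le_trans (Finset.le_sup (Finset.mem_univ i)) hk) _
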